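/- arXiv:2602.22665 — 3 statements merged into one kernel-verified Lean document; each statement's English description precedes it below -/
import Mathlib

section
/- (Composability of the canonical partial action.) Let S be an inverse semigroup, let χ : S → Bool be a character of S, and let s, t ∈ S. If χ(star(s·t)·(s·t)) = true, then χ(star(t)·t) = true and (θ_t χ)(star(s)·s) = true; moreover θ_s(θ_t(χ)) and θ_{s·t}(χ) agree on all of S. -/
/-- Composability of the canonical partial action: let `S` be an
inverse semigroup, `χ : S → Bool` a character, and `s t ∈ S`.  If
`χ (star (s*t) * (s*t)) = true`, then `χ (star t * t) = true` and
`(θ_t χ) (star s * s) = true`; moreover `θ_s (θ_t χ)` and `θ_{s*t} χ`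
agree on all of `S`. -/
theorem theta_composable {S : Type*} [Semigroup S] (star : S → S)
    (hinv : ∀ s : S, star (star s) = s)
    (hanti : ∀ s t : S, star (s * t) = star t * star s)
    (hreg : ∀ s : S, s * star s * s = s)
    (hcomm : ∀ e f : S, e * e = e → f * f = f → e * f = f * e)
    (χ : S → Bool)
    (hchar : ∀ e f : S, e * e = e → f * f = f → χ (e * f) = (χ e && χ f))
    (s t : S) (hst : χ (star (s * t) * (s * t)) = true) :
    χ (star t * t) = true ∧
    χ (star t * (star s * s) * t) = true ∧
    ∀ e : S, χ (star t * (star s * e * s) * t) = χ (star (s * t) * e * (s * t)) := by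
  have idemL : ∀ x : S, (star x * x) * (star x * x) = star x * x := by
    intro x
    calc (star x * x) * (star x * x) = star x * (x * star x * x) := by
          simp [mul_assoc]
      _ = star x * x := by rw [hreg]
  have idemR : ∀ x : S, (x * star x) * (x * star x) = x * star x := by
    intro x
    calc (x * star x) * (x * star x) = (x * star x * x) * star x := by
          simp [mul_assoc]
      _ = x * star x := by rw [hreg]
  have hreg' : ∀ x : S, star x * x * star x = star x := by
    intro x
    have := hreg (star x); rwa [hinv] at this
  -- key element
  set a := star t * (star s * s) * t with ha
  have haeq : star (s * t) * (s * t) = a := by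
    rw [hanti]; simp [ha, mul_assoc]
  have hA : χ a = true := by rw [← haeq]; exact hst
  have hcom : (star s * s) * (t * star t) = (t * star t) * (star s * s) :=
    hcomm _ _ (idemL s) (idemR t)
  have haidem : a * a = a := by
    calc a * a = star t * ((star s * s) * (t * star t) * (star s * s)) * t := by
          simp [ha, mul_assoc]
      _ = star t * ((t * star t) * ((star s * s) * (star s * s))) * t := by
          rw [hcom]; simp [mul_assoc]
      _ = star t * ((t * star t) * (star s * s)) * t := by rw [idemL]
      _ = (star t * t * star t) * ((star s * s) * t) := by simp [mul_assoc]
      _ = star t * ((star s * s) * t) := by rw [hreg']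
      _ = a := by simp [ha, mul_assoc]
  have habsorb : a * (star t * t) = a := by
    calc a * (star t * t) = star t * (star s * s) * (t * star t * t) := by
          simp [ha, mul_assoc]
      _ = a := by rw [hreg]
  have h1 : χ (star t * t) = true := by
    have := hchar a (star t * t) haidem (idemL t)
    rw [habsorb, hA] at this
    exact (Bool.true_and _ ▸ this).symm
  refine ⟨h1, hA, fun e => ?_⟩
  rw [hanti]
  simp [mul_assoc]
end

section
/- (Well-definedness of germ inversion.) Let S be an inverse semigroup, let s, t ∈ S, and let e ∈ S be an idempotent with s·e = t·e. Then: (i) e·star(s) = e·star(t); (ii) the element f := s·e·star(s) is idempotent and satisfies star(s)·f = star(t)·f; and (iii) for any character χ : S → Bool with χ(e) = true and χ(star(s)·s) = true, one has χ(star(s)·f·s) = true, i.e. (θ_s χ)(f) = true. -/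
/-- Well-definedness of germ inversion: let `S` be an inverse
semigroup, `s t ∈ S`, and `e` an idempotent with `s * e = t * e`.  Then
(i) `e * star s = e * star t`; (ii) `f := s * e * star s` is idempotent and
`star s * f = star t * f`; and (iii) for any character `χ` with `χ e = true`
and `χ (star s * s) = true` one has `χ (star s * f * s) = true`,
i.e. `(θ_s χ) f = true`. -/
theorem germ_inversion_well_defined {S : Type*} [Semigroup S] (star : S → S)
    (hinv : ∀ s : S, star (star s) = s)
    (hanti : ∀ s t : S, star (s * t) = star t * star s)
    (hreg : ∀ s : S, s * star s * s = s)
    (hcomm : ∀ e f : S, e * e = e → f * f = f → e * f = f * e)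
    (s t e : S) (he : e * e = e) (hst : s * e = t * e) :
    (e * star s = e * star t) ∧
    ((s * e * star s) * (s * e * star s) = s * e * star s ∧
      star s * (s * e * star s) = star t * (s * e * star s)) ∧
    (∀ χ : S → Bool,
      (∀ e' f' : S, e' * e' = e' → f' * f' = f' → χ (e' * f') = (χ e' && χ f')) →
      χ e = true → χ (star s * s) = true →
      χ (star s * (s * e * star s) * s) = true) := by
  -- star of an idempotent is itself
  have hstar_idem : ∀ x : S, x * x = x → star x = x := by
    intro x hx
    have hsxs : star x * x * star x = star x := by
      have h := hreg (star x); rwa [hinv] at h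
    have h1 : (x * star x) * (x * star x) = x * star x := by
      calc (x * star x) * (x * star x) = x * (star x * x * star x) := by
            simp only [mul_assoc]
        _ = x * star x := by rw [hsxs]
    have h2 : (star x * x) * (star x * x) = star x * x := by
      calc (star x * x) * (star x * x) = (star x * x * star x) * x := by
            simp only [mul_assoc]
        _ = star x * x := by rw [hsxs]
    have h3 : x * star x = x := by
      have hc := hcomm x (x * star x) hx h1
      calc x * star x = (x * x) * star x := by rw [hx]
        _ = x * (x * star x) := by rw [mul_assoc]
        _ = (x * star x) * x := hc
        _ = x := hreg x
    have h4 : star x * x = x := by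
      have hc := hcomm x (star x * x) hx h2
      calc star x * x = star x * (x * x) := by rw [hx]
        _ = (star x * x) * x := by rw [mul_assoc]
        _ = x * (star x * x) := hc.symm
        _ = (x * star x) * x := by rw [mul_assoc]
        _ = x := hreg x
    calc star x = star x * x * star x := hsxs.symm
      _ = x * star x := by rw [h4]
      _ = x := h3
  have hse : star e = e := hstar_idem e he
  -- (i)
  have hi : e * star s = e * star t := by
    have h := congrArg star hst
    rwa [hanti s e, hanti t e, hse] at h
  -- basic idempotents
  have hsss : star s * s * star s = star s := by
    have h := hreg (star s); rwa [hinv] at h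
  have hstt : star t * t * star t = star t := by
    have h := hreg (star t); rwa [hinv] at h
  have hss_idem : (star s * s) * (star s * s) = star s * s := by
    calc (star s * s) * (star s * s) = (star s * s * star s) * s := by
          simp only [mul_assoc]
      _ = star s * s := by rw [hsss]
  have htt_idem : (star t * t) * (star t * t) = star t * t := by
    calc (star t * t) * (star t * t) = (star t * t * star t) * t := by
          simp only [mul_assoc]
      _ = star t * t := by rw [hstt]
  have hcse : e * (star s * s) = (star s * s) * e := hcomm e _ he hss_idem
  have hcte : e * (star t * t) = (star t * t) * e := hcomm e _ he htt_idem
  -- f is idempotent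
  have hf_idem : (s * e * star s) * (s * e * star s) = s * e * star s := by
    calc (s * e * star s) * (s * e * star s)
        = s * ((e * (star s * s)) * (e * star s)) := by simp only [mul_assoc]
      _ = s * (((star s * s) * e) * (e * star s)) := by rw [hcse]
      _ = (s * star s * s) * ((e * e) * star s) := by simp only [mul_assoc]
      _ = s * e * star s := by rw [hreg s, he, ← mul_assoc]
  -- star s * f = e * star s
  have hsf : star s * (s * e * star s) = e * star s := by
    calc star s * (s * e * star s)
        = ((star s * s) * e) * star s := by simp only [mul_assoc]
      _ = (e * (star s * s)) * star s := by rw [hcse]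
      _ = e * (star s * s * star s) := by simp only [mul_assoc]
      _ = e * star s := by rw [hsss]
  -- f = t * e * star t
  have hf_t : s * e * star s = t * e * star t := by
    rw [hst, mul_assoc, hi, ← mul_assoc]
  -- star t * f = e * star t
  have htf : star t * (s * e * star s) = e * star t := by
    rw [hf_t]
    calc star t * (t * e * star t)
        = ((star t * t) * e) * star t := by simp only [mul_assoc]
      _ = (e * (star t * t)) * star t := by rw [hcte]
      _ = e * (star t * t * star t) := by simp only [mul_assoc]
      _ = e * star t := by rw [hstt]
  refine ⟨hi, ⟨hf_idem, ?_⟩, ?_⟩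
  · rw [hsf, htf, hi]
  · intro χ hchar hχe hχss
    have key : star s * (s * e * star s) * s = e * (star s * s) := by
      rw [hsf, mul_assoc]
    rw [key, hchar e (star s * s) he hss_idem, hχe, hχss]
    rfl
end

section
/- (Twisted involution is anti-multiplicative.) Let G be a groupoid with finitely many objects and finite hom-sets, and let σ be a normalized 2-cocycle on G valued in complex numbers of modulus 1. For a function f from the morphisms of G to ℂ, define its adjoint f* by f*(γ) := conj(σ(γ, inv γ)) · conj(f(inv γ)). Then for all ℂ-valued functions f, g on the morphisms of G, (f ∗_σ g)* = g* ∗_σ f*, where ∗_σ denotes the twisted convolution. -/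
open CategoryTheory

/-- Twisted convolution of `ℂ`-valued functions on the morphisms of a finite
groupoid, with respect to a `2`-cocycle `σ`. -/
noncomputable def twistedConv {G : Type*} [Groupoid G] [Fintype G]
    [∀ a b : G, Fintype (a ⟶ b)]
    (σ : ∀ {a b c : G}, (a ⟶ b) → (b ⟶ c) → ℂ)
    (f g : ∀ a b : G, (a ⟶ b) → ℂ) (a c : G) (γ : a ⟶ c) : ℂ :=
  letI : DecidableEq (a ⟶ c) := Classical.decEq _
  ∑ b : G, ∑ α : a ⟶ b, ∑ β : b ⟶ c,
    if α ≫ β = γ then f a b α * g b c β * σ α β else 0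

/-- The twisted adjoint `f* γ := conj (σ (γ, inv γ)) * conj (f (inv γ))`. -/
noncomputable def twistedAdj {G : Type*} [Groupoid G]
    (σ : ∀ {a b c : G}, (a ⟶ b) → (b ⟶ c) → ℂ)
    (f : ∀ a b : G, (a ⟶ b) → ℂ) (a b : G) (γ : a ⟶ b) : ℂ :=
  starRingEnd ℂ (σ γ (Groupoid.inv γ)) * starRingEnd ℂ (f b a (Groupoid.inv γ))

/-- Key cocycle identity used for anti-multiplicativity of the involution. -/
lemma twisted_key {G : Type*} [Groupoid G]
    (σ : ∀ {a b c : G}, (a ⟶ b) → (b ⟶ c) → ℂ)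
    (hcoc : ∀ {a b c d : G} (f : a ⟶ b) (g : b ⟶ c) (h : c ⟶ d),
      σ f g * σ (f ≫ g) h = σ g h * σ f (g ≫ h))
    (hnl : ∀ {a b : G} (g : a ⟶ b), σ (𝟙 a) g = 1)
    {a b c : G} (α' : a ⟶ b) (β' : b ⟶ c) :
    σ β' (inv β') * σ α' (inv α') =
      σ α' β' * σ (α' ≫ β') (inv β' ≫ inv α') * σ (inv β') (inv α') := by
  have h1 := hcoc α' β' (inv β' ≫ inv α')
  have h2 := hcoc β' (inv β') (inv α')
  simp only [IsIso.hom_inv_id_assoc, IsIso.hom_inv_id, hnl, one_mul, mul_one] at h1 h2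
  linear_combination σ α' (inv α') * h2 - σ (inv β') (inv α') * h1

/-- Twisted involution is anti-multiplicative: for a groupoid
with finitely many objects and finite hom-sets and a normalized unimodular
`2`-cocycle `σ`, one has `(f ∗_σ g)* = g* ∗_σ f*` for all `ℂ`-valued
functions `f g` on the morphisms of `G`. -/
theorem twistedAdj_conv {G : Type*} [Groupoid G] [Fintype G]
    [∀ a b : G, Fintype (a ⟶ b)]
    (σ : ∀ {a b c : G}, (a ⟶ b) → (b ⟶ c) → ℂ)
    (hmod : ∀ {a b c : G} (f : a ⟶ b) (g : b ⟶ c), ‖σ f g‖ = 1)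
    (hcoc : ∀ {a b c d : G} (f : a ⟶ b) (g : b ⟶ c) (h : c ⟶ d),
      σ f g * σ (f ≫ g) h = σ g h * σ f (g ≫ h))
    (hnl : ∀ {a b : G} (g : a ⟶ b), σ (𝟙 a) g = 1)
    (hnr : ∀ {a b : G} (f : a ⟶ b), σ f (𝟙 b) = 1)
    (f g : ∀ a b : G, (a ⟶ b) → ℂ) :
    twistedAdj σ (twistedConv σ f g) =
      twistedConv σ (twistedAdj σ g) (twistedAdj σ f) := by
  funext a c γ
  classical
  unfold twistedAdj twistedConv
  simp only [Groupoid.inv_eq_inv, map_sum, Finset.mul_sum]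
  refine Fintype.sum_congr _ _ fun b => ?_
  rw [Finset.sum_comm]
  rw [← Equiv.sum_comp (Groupoid.invEquiv (X := a) (Y := b))
    (fun β : b ⟶ a => ∑ α : c ⟶ b, starRingEnd ℂ (σ γ (inv γ)) *
      starRingEnd ℂ (if α ≫ β = inv γ then f c b α * g b a β * σ α β else 0))]
  refine Fintype.sum_congr _ _ fun α' => ?_
  rw [← Equiv.sum_comp (Groupoid.invEquiv (X := b) (Y := c))
    (fun α : c ⟶ b => starRingEnd ℂ (σ γ (inv γ)) *
      starRingEnd ℂ (if α ≫ Groupoid.invEquiv α' = inv γ then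
        f c b α * g b a (Groupoid.invEquiv α') * σ α (Groupoid.invEquiv α') else 0))]
  refine Fintype.sum_congr _ _ fun β' => ?_
  simp only [Groupoid.invEquiv_apply, Groupoid.inv_eq_inv]
  have hiff : inv β' ≫ inv α' = inv γ ↔ α' ≫ β' = γ := by
    constructor
    · intro h
      have := congrArg (fun x : c ⟶ a => CategoryTheory.inv x) h
      simpa using this
    · intro h; subst h; simp
  by_cases h : α' ≫ β' = γ
  · rw [if_pos (hiff.mpr h), if_pos h]
    subst h
    have key := twisted_key σ hcoc hnl α' β'
    have keyc := congrArg (starRingEnd ℂ) key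
    simp only [map_mul] at keyc
    have hC1 : Complex.normSq (σ α' β') = 1 := by
      rw [Complex.normSq_eq_norm_sq, hmod]; norm_num
    have hone : starRingEnd ℂ (σ α' β') * σ α' β' = 1 := by
      rw [mul_comm, Complex.mul_conj, hC1]; norm_num
    have hde : starRingEnd ℂ (σ (α' ≫ β') (inv β' ≫ inv α')) *
        starRingEnd ℂ (σ (inv β') (inv α')) =
        starRingEnd ℂ (σ β' (inv β')) * starRingEnd ℂ (σ α' (inv α')) * σ α' β' := by
      linear_combination (-(σ α' β')) * keyc -
        starRingEnd ℂ (σ (α' ≫ β') (inv β' ≫ inv α')) *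
          starRingEnd ℂ (σ (inv β') (inv α')) * hone
    simp only [map_mul, IsIso.inv_comp]
    linear_combination starRingEnd ℂ (f c b (inv β')) *
      starRingEnd ℂ (g b a (inv α')) * hde
  · rw [if_neg (fun hc => h (hiff.mp hc)), if_neg h]
    simp
end
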